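/- The bath correlation matrix function is of positive type: for every m ∈ ℕ, all times t_1, …, t_m ∈ ℝ, and all vectors ξ_1, …, ξ_m ∈ ℂ^K, the number Σ_{i,j=1}^m Σ_{μ,ν=1}^K conj((ξ_i)_μ) (ξ_j)_ν C_{μν}(t_i − t_j) is a nonnegative real number. -/

import Mathlib

open scoped Matrix ComplexOrder

/-- The bath correlation function `C_{μν}(t) := Tr(e^{iH_B t} B_μ† e^{−iH_B t} B_ν ρ)`. -/
noncomputable def bathCorr {N K : ℕ} (HB : Matrix (Fin N) (Fin N) ℂ)
    (B : Fin K → Matrix (Fin N) (Fin N) ℂ) (ρ : Matrix (Fin N) (Fin N) ℂ)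
    (μ ν : Fin K) (t : ℝ) : ℂ :=
  (NormedSpace.exp ((Complex.I * t) • HB) * (B μ)ᴴ *
      NormedSpace.exp ((-(Complex.I * t)) • HB) * B ν * ρ).trace

namespace BathAux

open Matrix
open scoped MatrixOrder

variable {N : ℕ} (HB : Matrix (Fin N) (Fin N) ℂ)

/-- `E c = exp (c • HB)` -/
noncomputable def E (c : ℂ) : Matrix (Fin N) (Fin N) ℂ :=
  NormedSpace.exp (c • HB)

lemma E_mul (c d : ℂ) : E HB c * E HB d = E HB (c + d) := by
  unfold E
  rw [add_smul, Matrix.exp_add_of_commute]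
  exact ((Commute.refl HB).smul_left c).smul_right d

lemma E_zero : E HB 0 = 1 := by simp [E, NormedSpace.exp_zero]

lemma E_conjTranspose (hHB : HB.IsHermitian) (c : ℂ) :
    (E HB c)ᴴ = E HB (star c) := by
  unfold E
  rw [← Matrix.exp_conjTranspose, conjTranspose_smul, hHB.eq]

lemma E_comm_of_comm {ρ : Matrix (Fin N) (Fin N) ℂ} (hcomm : ρ * HB = HB * ρ) (c : ℂ) :
    ρ * E HB c = E HB c * ρ :=
  by
    have h : Commute ρ HB := hcomm
    exact (h.smul_right c).exp_right

/-- The PSD square root commutes with `E c` for skew-adjoint scalars `c` (star c = -c). -/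
lemma sqrt_E_comm (hHB : HB.IsHermitian) {ρ : Matrix (Fin N) (Fin N) ℂ}
    (hρ : ρ.PosSemidef) (hcomm : ρ * HB = HB * ρ) (c : ℂ) (hc : star c = -c) :
    CFC.sqrt ρ * E HB c = E HB c * CFC.sqrt ρ := by
  set S := CFC.sqrt ρ with hS
  set U := E HB c with hU
  set V := E HB (-c) with hV
  have hUV : U * V = 1 := by rw [hU, hV, E_mul]; simp [E_zero]
  have hVU : V * U = 1 := by rw [hU, hV, E_mul]; simp [E_zero]
  have hUadj : Uᴴ = V := by rw [hU, hV, E_conjTranspose HB hHB, hc]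
  have hρV : ρ * V = V * ρ := E_comm_of_comm HB hcomm (-c)
  have hApsd : (V * S * U).PosSemidef := by
    have := (CFC.sqrt_nonneg ρ).posSemidef.conjTranspose_mul_mul_same U
    rwa [hUadj] at this
  have hsq : (V * S * U) ^ 2 = ρ := by
    have h1 : (V * S * U) ^ 2 = V * S * (U * V) * S * U := by
      rw [pow_two]; noncomm_ring
    rw [h1, hUV, mul_one]
    have h2 : V * S * S * U = V * ρ * U := by
      rw [mul_assoc (V) S S, CFC.sqrt_mul_sqrt_self ρ hρ.nonneg]
    rw [h2, ← hρV, mul_assoc, hVU, mul_one]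
  have heq : V * S * U = S := ((CFC.sqrt_eq_iff ρ (V * S * U) hρ.nonneg hApsd.nonneg).mpr (by rw [← sq]; exact hsq)).symm
  calc S * U = (U * V) * S * U := by rw [hUV, one_mul]
    _ = U * (V * S * U) := by noncomm_ring
    _ = U * S := by rw [heq]

end BathAux

/-- the bath correlation matrix function is of positive type. -/
theorem bathCorr_posType {N K : ℕ} (HB : Matrix (Fin N) (Fin N) ℂ) (hHB : HB.IsHermitian)
    (ρ : Matrix (Fin N) (Fin N) ℂ) (hρ : ρ.PosSemidef) (hcomm : ρ * HB = HB * ρ)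
    (B : Fin K → Matrix (Fin N) (Fin N) ℂ)
    (m : ℕ) (t : Fin m → ℝ) (ξ : Fin m → Fin K → ℂ) :
    0 ≤ ∑ i : Fin m, ∑ j : Fin m, ∑ μ : Fin K, ∑ ν : Fin K,
        (starRingEnd ℂ) (ξ i μ) * ξ j ν * bathCorr HB B ρ μ ν (t i - t j) := by
  classical
  open Matrix BathAux MatrixOrder in
  set S := CFC.sqrt ρ with hS
  set X : Fin m → Matrix (Fin N) (Fin N) ℂ := fun j => ∑ ν : Fin K, ξ j ν • B ν with hX
  set Y : Fin m → Matrix (Fin N) (Fin N) ℂ :=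
    fun j => E HB (Complex.I * t j) * X j * S * E HB (-(Complex.I * t j)) with hY
  -- key per-pair identity
  have key : ∀ i j : Fin m, ((Y i)ᴴ * Y j).trace =
      ∑ μ : Fin K, ∑ ν : Fin K,
        (starRingEnd ℂ) (ξ i μ) * ξ j ν * bathCorr HB B ρ μ ν (t i - t j) := by
    intro i j
    set c : ℂ := Complex.I * t i with hc
    set d : ℂ := Complex.I * t j with hd
    have hSherm : Sᴴ = S := (CFC.sqrt_nonneg ρ).posSemidef.1
    have hScomm : ∀ e : ℂ, star e = -e → S * E HB e = E HB e * S := fun e he =>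
      sqrt_E_comm HB hHB hρ hcomm e he
    have hcstar : star c = -c := by simp [hc, Complex.conj_ofReal]
    have hdstar : star d = -d := by simp [hd, Complex.conj_ofReal]
    have hYadj : (Y i)ᴴ = E HB c * S * (X i)ᴴ * E HB (-c) := by
      rw [hY]
      simp only [conjTranspose_mul, E_conjTranspose HB hHB, hSherm, hcstar, star_neg, neg_neg]
      simp only [← hc, hcstar, star_neg, neg_neg]
      noncomm_ring
    -- trace manipulation
    have step1 : ((Y i)ᴴ * Y j).trace
        = (E HB (c - d) * S * (X i)ᴴ * E HB (-(c - d)) * X j * S).trace := by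
      rw [hYadj, hY]
      have : E HB c * S * (X i)ᴴ * E HB (-c) * (E HB d * X j * S * E HB (-d))
          = (E HB c * S * (X i)ᴴ * (E HB (-c) * E HB d) * X j * S) * E HB (-d) := by
        noncomm_ring
      rw [this, Matrix.trace_mul_comm, E_mul]
      have : E HB (-d) * (E HB c * S * (X i)ᴴ * E HB (-c + d) * X j * S)
          = (E HB (-d) * E HB c) * S * (X i)ᴴ * E HB (-c + d) * X j * S := by
        noncomm_ring
      rw [this, E_mul]
      ring_nf
    have step2 : (E HB (c - d) * S * (X i)ᴴ * E HB (-(c - d)) * X j * S).trace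
        = (E HB (c - d) * (X i)ᴴ * E HB (-(c - d)) * X j * ρ).trace := by
      have hcd : star (c - d) = -(c - d) := by rw [star_sub, hcstar, hdstar]; ring
      have h1 : E HB (c - d) * S * (X i)ᴴ * E HB (-(c - d)) * X j * S
          = S * (E HB (c - d) * (X i)ᴴ * E HB (-(c - d)) * X j * S) := by
        rw [← hScomm (c - d) hcd]; noncomm_ring
      rw [h1, Matrix.trace_mul_comm]
      have h2 : E HB (c - d) * (X i)ᴴ * E HB (-(c - d)) * X j * S * S
          = E HB (c - d) * (X i)ᴴ * E HB (-(c - d)) * X j * (S * S) := by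
        noncomm_ring
      rw [h2, hS, CFC.sqrt_mul_sqrt_self ρ hρ.nonneg]
    rw [step1, step2]
    -- expand the sums
    have hcd1 : c - d = Complex.I * ((t i - t j : ℝ) : ℂ) := by
      rw [hc, hd]; push_cast; ring
    have hXiadj : (X i)ᴴ = ∑ μ : Fin K, (starRingEnd ℂ) (ξ i μ) • (B μ)ᴴ := by
      show (∑ ν : Fin K, ξ i ν • B ν)ᴴ = _
      rw [Matrix.conjTranspose_sum]
      exact Finset.sum_congr rfl fun μ _ => by
        rw [Matrix.conjTranspose_smul, starRingEnd_apply]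
    rw [hXiadj, hX, hcd1]
    simp only [Matrix.mul_sum, Matrix.sum_mul, Matrix.trace_sum, Matrix.mul_smul,
      Matrix.smul_mul, Matrix.trace_smul, smul_smul, smul_eq_mul, bathCorr]
    simp only [Finset.mul_sum]
    rw [Finset.sum_comm]
    refine Finset.sum_congr rfl fun μ _ => Finset.sum_congr rfl fun ν _ => ?_
    simp only [E, starRingEnd_apply]
    ring
  -- now the positivity
  have hsum : ∑ i : Fin m, ∑ j : Fin m, ∑ μ : Fin K, ∑ ν : Fin K,
        (starRingEnd ℂ) (ξ i μ) * ξ j ν * bathCorr HB B ρ μ ν (t i - t j)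
      = ((∑ i, Y i)ᴴ * ∑ j, Y j).trace := by
    rw [conjTranspose_sum, Matrix.sum_mul]
    rw [Matrix.trace_sum]
    refine Finset.sum_congr rfl fun i _ => ?_
    rw [Matrix.mul_sum, Matrix.trace_sum]
    exact Finset.sum_congr rfl fun j _ => (key i j).symm
  rw [hsum]
  set Z := ∑ i, Y i with hZ
  have : (Zᴴ * Z).trace = ∑ p : Fin N, ∑ q : Fin N, star (Z q p) * Z q p := by
    simp [Matrix.trace, Matrix.mul_apply, Matrix.diag, Matrix.conjTranspose_apply]
  rw [this]
  refine Finset.sum_nonneg fun p _ => Finset.sum_nonneg fun q _ => star_mul_self_nonneg _
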